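/- A connected graph N whose vertices all have degree 1 or 3 and whose degree-1 vertices form the set X is tree-based (i.e., has a spanning tree whose leaf set equals X) if and only if for every blob B of N (maximal subgraph with no cut-edge that is not a single vertex), the simple network B_N obtained by taking the union of B with all cut-edges of N incident to B is tree-based. -/

import Mathlib

open SimpleGraph

/-- The Mathlib (Dec 2024) notion of a bridge: an edge of `G` whose removal disconnects
its endpoints. -/
def SimpleGraph.IsBridge' {V : Type*} (G : SimpleGraph V) (e : Sym2 V) : Prop :=
  e ∈ G.edgeSet ∧
    Sym2.lift ⟨fun v w => ¬(G \ fromEdgeSet {e}).Reachable v w, by simp [reachable_comm]⟩ e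

/-- Degree of a vertex (as the cardinality of its neighbour set). -/
noncomputable def deg {W : Type*} (G : SimpleGraph W) (v : W) : ℕ :=
  (G.neighborSet v).ncard

/-- `T` is a support-tree for `G` with leaf set `X`: a spanning tree of `G`
whose leaves (vertices of degree at most 1) are exactly `X`. -/
def IsSupportTree {W : Type*} (G T : SimpleGraph W) (X : Set W) : Prop :=
  T ≤ G ∧ T.IsTree ∧ {v | deg T v ≤ 1} = X

/-- A graph is tree-based on `X` if it has a support-tree with leaf set `X`. -/
def TreeBased {W : Type*} (G : SimpleGraph W) (X : Set W) : Prop :=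
  ∃ T, IsSupportTree G T X

/-- An unrooted phylogenetic network on `X`: a connected graph all of whose
vertices have degree 1 or 3 (allowing the single-vertex convention via `≤ 1`),
whose leaves are exactly `X`. -/
def IsNetwork {W : Type*} (G : SimpleGraph W) (X : Set W) : Prop :=
  G.Connected ∧ (∀ v, deg G v ≤ 1 ∨ deg G v = 3) ∧ {v | deg G v ≤ 1} = X

/-- The cut-edge `{u,v}` induces a split of `X`: each side of the deleted edge
contains an element of `X`. -/
def InducesSplit {W : Type*} (G : SimpleGraph W) (X : Set W) (u v : W) : Prop :=
  (∃ a ∈ X, (G.deleteEdges {s(u, v)}).Reachable u a) ∧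
    ∃ b ∈ X, (G.deleteEdges {s(u, v)}).Reachable v b

/-- A network is proper if every cut-edge induces a split of `X`. -/
def ProperNet {W : Type*} (G : SimpleGraph W) (X : Set W) : Prop :=
  ∀ u v : W, G.IsBridge' s(u, v) → InducesSplit G X u v

/-- A network is simple if every cut-edge is trivial, i.e. has a leaf endpoint. -/
def SimpleNet {W : Type*} (G : SimpleGraph W) (X : Set W) : Prop :=
  ∀ u v : W, G.IsBridge' s(u, v) → u ∈ X ∨ v ∈ X

/-- A graph is bridgeless if it has no cut-edge. -/
def Bridgeless {W : Type*} (H : SimpleGraph W) : Prop :=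
  ∀ e, ¬ H.IsBridge' e

/-- A blob of `G`: a maximal connected subgraph without a cut-edge that is not
a single vertex. -/
def IsBlob {W : Type*} (G : SimpleGraph W) (B : G.Subgraph) : Prop :=
  B.verts.Nontrivial ∧ B.Connected ∧ Bridgeless B.coe ∧
    ∀ B' : G.Subgraph, B'.verts.Nontrivial → B'.Connected → Bridgeless B'.coe →
      B ≤ B' → B = B'

/-- The simple network `B_N` associated to a blob `B`: the union of `B` with
all cut-edges of `G` incident to `B`. -/
def blobNet {W : Type*} (G : SimpleGraph W) (B : G.Subgraph) : G.Subgraph where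
  verts := B.verts ∪ {w | ∃ u ∈ B.verts, G.IsBridge' s(u, w)}
  Adj a b := B.Adj a b ∨ (G.IsBridge' s(a, b) ∧ (a ∈ B.verts ∨ b ∈ B.verts))
  adj_sub := by
    rintro v w (h | ⟨h, -⟩)
    · exact B.adj_sub h
    · exact (SimpleGraph.mem_edgeSet G).mp h.1
  edge_vert := by
    rintro v w (h | ⟨h, hv | hw⟩)
    · exact Or.inl (B.edge_vert h)
    · exact Or.inl hv
    · exact Or.inr ⟨w, hw, by rwa [Sym2.eq_swap]⟩
  symm := ⟨by
    rintro v w (h | ⟨h, hc⟩)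
    · exact Or.inl (B.adj_symm h)
    · exact Or.inr ⟨by rwa [Sym2.eq_swap], hc.symm⟩⟩

/-- The leaf set of `B_N`: endpoints of incident cut-edges not lying in `B`. -/
def blobNetLeaves {W : Type*} (G : SimpleGraph W) (B : G.Subgraph) :
    Set (blobNet G B).verts :=
  {w | (w : W) ∉ B.verts}

/-- `G` is a level-`k` network: at most `k` edges must be removed from each
blob to obtain a tree. -/
def Level {W : Type*} (G : SimpleGraph W) (k : ℕ) : Prop :=
  ∀ B : G.Subgraph, IsBlob G B → B.edgeSet.ncard ≤ B.verts.ncard - 1 + k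
/-- The network `N − x`: delete leaf `x` and its incident edge and suppress the
resulting degree-2 vertex `v` (the former neighbour of `x`). -/
def suppressAdj {V : Type*} (G : SimpleGraph V) (x v : V) :
    SimpleGraph {w : V // w ≠ x ∧ w ≠ v} where
  Adj a b := a ≠ b ∧ (G.Adj a b ∨ (G.Adj v a ∧ G.Adj v b))
  symm := ⟨by
    rintro a b ⟨h1, h2 | ⟨h3, h4⟩⟩
    · exact ⟨h1.symm, Or.inl h2.symm⟩
    · exact ⟨h1.symm, Or.inr ⟨h4, h3⟩⟩⟩
  loopless := ⟨by rintro a ⟨h1, -⟩; exact h1 rfl⟩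

/-- The network `C_e(x,y)`: replace the edge `e = {u,v}` of `C` by a path
`u – w₁ – w₂ – v` and attach pendant leaves `x = Sum.inr 2` to `w₁ = Sum.inr 0`
and `y = Sum.inr 3` to `w₂ = Sum.inr 1`. -/
def extGraph {W : Type*} (C : SimpleGraph W) (u v : W) : SimpleGraph (W ⊕ Fin 4) :=
  SimpleGraph.fromEdgeSet
    ((Sym2.map Sum.inl) '' (C.edgeSet \ {s(u, v)}) ∪
      {s(Sum.inl u, Sum.inr 0), s(Sum.inr 0, Sum.inr 1), s(Sum.inr 1, Sum.inl v),
       s(Sum.inr 0, Sum.inr 2), s(Sum.inr 1, Sum.inr 3)})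

/-- The leaves `x` and `y` of `C_e(x,y)`. -/
def extLeaves (W : Type*) : Set (W ⊕ Fin 4) := {Sum.inr 2, Sum.inr 3}

/-- The Petersen graph, realized as the Kneser graph K(5,2). -/
def petersen : SimpleGraph {s : Finset (Fin 5) // s.card = 2} where
  Adj a b := Disjoint (a : Finset (Fin 5)) (b : Finset (Fin 5))
  symm := ⟨fun a b h => h.symm⟩
  loopless := ⟨fun a h => by
    have h2 : (a : Finset (Fin 5)) = ∅ := by
      simpa using disjoint_self.mp h
    have := a.2
    rw [h2] at this
    simp at this⟩

/-- `D` is an orientation of the edges of `G`. -/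
def IsOrientation {V : Type*} (G : SimpleGraph V) (D : V → V → Prop) : Prop :=
  (∀ u v, G.Adj u v ↔ (D u v ∨ D v u)) ∧ ∀ u v, ¬ (D u v ∧ D v u)

noncomputable def outdeg {α : Type*} (r : α → α → Prop) (v : α) : ℕ := {w | r v w}.ncard
noncomputable def indeg {α : Type*} (r : α → α → Prop) (v : α) : ℕ := {w | r w v}.ncard

/-- A rooted (binary) phylogenetic network with root `ρ` and leaf set `Y`:
a DAG with a unique root of indegree 0 and outdegree 2, leaves (outdegree 0,
indegree 1) exactly `Y`, and all non-root vertices of total degree 1 or 3. -/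
def IsRootedNetwork {α : Type*} (r : α → α → Prop) (ρ : α) (Y : Set α) : Prop :=
  (∀ v, ¬ Relation.TransGen r v v) ∧
  indeg r ρ = 0 ∧ outdeg r ρ = 2 ∧
  (∀ v, indeg r v = 0 → v = ρ) ∧
  (∀ v, v ≠ ρ → indeg r v + outdeg r v = 1 ∨ indeg r v + outdeg r v = 3) ∧
  {v | outdeg r v = 0} = Y ∧ (∀ v ∈ Y, indeg r v = 1)

/-- A rooted network is tree-based if it contains a spanning arborescence
rooted at `ρ` whose leaf set is `Y`. -/
def RootedTreeBased {α : Type*} (r : α → α → Prop) (ρ : α) (Y : Set α) : Prop :=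
  ∃ t : α → α → Prop, (∀ a b, t a b → r a b) ∧
    (∀ v, Relation.ReflTransGen t ρ v) ∧
    (∀ v, v ≠ ρ → indeg t v = 1) ∧ indeg t ρ = 0 ∧
    {v | outdeg t v = 0} = Y

/-- `T` is obtained from `T'` by suppressing all degree-2 vertices, via the
embedding `f` of the vertices of `T` into those of `T'`. -/
def Suppresses {A B : Type*} (T' : SimpleGraph A) (T : SimpleGraph B) (f : B → A) : Prop :=
  Function.Injective f ∧
  (∀ a : A, deg T' a ≠ 2 → a ∈ Set.range f) ∧
  (∀ b : B, deg T' (f b) ≠ 2) ∧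
  ∀ b b' : B, T.Adj b b' ↔
    ∃ p : T'.Walk (f b) (f b'), p.IsPath ∧
      ∀ a ∈ p.support, a ≠ f b → a ≠ f b' → deg T' a = 2

/-- `G` is fully tree-based on `X`: every subtree of `G` whose leaf set is `X`
is spanning (hence a support-tree). -/
def FullyTreeBased {W : Type*} (G : SimpleGraph W) (X : Set W) : Prop :=
  ∀ H : G.Subgraph, H.Connected → H.coe.IsAcyclic →
    {v | v ∈ H.verts ∧ (H.neighborSet v).ncard ≤ 1} = X → H.IsSpanning


/-! ### Auxiliary lemmas for `stmt0` -/

namespace Stmt0Aux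

open SimpleGraph Walk

variable {V : Type*} {G : SimpleGraph V}

lemma del_eq (K : SimpleGraph V) (s : Set (Sym2 V)) :
    K \ SimpleGraph.fromEdgeSet s = K.deleteEdges s := rfl

lemma isBridge'_iff {K : SimpleGraph V} {u v : V} : K.IsBridge' s(u, v) ↔
    K.Adj u v ∧ ¬ (K \ SimpleGraph.fromEdgeSet {s(u, v)}).Reachable u v := Iff.rfl

lemma isBridge'_cyc {K : SimpleGraph V} {v w : V} : K.IsBridge' s(v, w) ↔
    K.Adj v w ∧ ∀ ⦃u : V⦄ (p : K.Walk u u), p.IsCycle → s(v, w) ∉ p.edges := by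
  rw [isBridge'_iff]
  constructor
  · rintro ⟨h, hn⟩
    refine ⟨h, fun u p hp he => hn ?_⟩
    exact (adj_and_reachable_delete_edges_iff_exists_cycle.mpr ⟨u, p, hp, he⟩).2
  · rintro ⟨h, hc⟩
    refine ⟨h, fun hr => ?_⟩
    obtain ⟨u, p, hp, he⟩ := adj_and_reachable_delete_edges_iff_exists_cycle.mp ⟨h, hr⟩
    exact hc p hp he

/-- The homomorphism from `H.coe` to `H.spanningCoe`. -/
def homCS (H : G.Subgraph) : H.coe →g H.spanningCoe where
  toFun := Subtype.val
  map_rel' := fun {a b} h => h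

lemma spanning_reach_of_connected {H : G.Subgraph} (hc : H.Connected) {a b : V}
    (ha : a ∈ H.verts) (hb : b ∈ H.verts) : H.spanningCoe.Reachable a b :=
  (hc ⟨a, ha⟩ ⟨b, hb⟩).map (homCS H)

lemma coe_reach_of_spanning {H : G.Subgraph} :
    ∀ {a b : V} (_ : H.spanningCoe.Walk a b) (ha : a ∈ H.verts) (hb : b ∈ H.verts),
      H.coe.Reachable ⟨a, ha⟩ ⟨b, hb⟩
  | _, _, Walk.nil, _, _ => Reachable.refl _
  | a, b, Walk.cons h p, ha, hb => by
      have hw : _ ∈ H.verts := H.edge_vert (Subgraph.adj_symm H h)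
      exact (SimpleGraph.Adj.reachable (by exact h : H.coe.Adj ⟨a, ha⟩ ⟨_, hw⟩)).trans
        (coe_reach_of_spanning p hw hb)

/-- Bridgelessness of a subgraph, phrased via `spanningCoe`. -/
def BrS (H : G.Subgraph) : Prop :=
  ∀ a b, H.Adj a b → ((H.deleteEdges {s(a, b)}).spanningCoe).Reachable a b

lemma subgraph_deleteEdges_mono {H K : G.Subgraph} (h : H ≤ K) (s : Set (Sym2 V)) :
    H.deleteEdges s ≤ K.deleteEdges s :=
  ⟨h.1, fun {a b} hab => ⟨h.2 hab.1, hab.2⟩⟩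

lemma bridgeless_coe_iff (H : G.Subgraph) : Bridgeless H.coe ↔ BrS H := by
  constructor
  · intro hb a b hab
    have ha : a ∈ H.verts := H.edge_vert hab
    have hb' : b ∈ H.verts := H.edge_vert hab.symm
    have h1 := hb s((⟨a, ha⟩ : H.verts), (⟨b, hb'⟩ : H.verts))
    rw [isBridge'_iff] at h1
    push_neg at h1
    have h2 := h1 hab
    rw [del_eq, Subgraph.deleteEdges_coe_eq] at h2
    have himg : (Sym2.map (Subtype.val) ''
        ({s((⟨a, ha⟩ : H.verts), (⟨b, hb'⟩ : H.verts))} : Set (Sym2 H.verts)))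
        = {s(a, b)} := by
      rw [Set.image_singleton, Sym2.map_pair_eq]
    rw [himg] at h2
    exact h2.map (homCS _)
  · intro h e
    induction e using Sym2.ind with
    | _ x y =>
      rintro hbr
      rw [isBridge'_iff] at hbr
      obtain ⟨hadj, hnr⟩ := hbr
      have hr := h x.val y.val hadj
      obtain ⟨p⟩ := hr
      have h2 := coe_reach_of_spanning p x.2 y.2
      rw [del_eq, Subgraph.deleteEdges_coe_eq] at hnr
      have himg : (Sym2.map (Subtype.val) '' ({s(x, y)} : Set (Sym2 H.verts)))
          = {s(x.val, y.val)} := by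
        rw [Set.image_singleton, Sym2.map_pair_eq]
      rw [himg] at hnr
      exact hnr (by exact h2)

lemma BrS.sup {H K : G.Subgraph} (hH : BrS H) (hK : BrS K) : BrS (H ⊔ K) := by
  intro a b hab
  rw [Subgraph.sup_adj] at hab
  rcases hab with h | h
  · exact (hH a b h).mono
      (Subgraph.spanningCoe_le_of_le (subgraph_deleteEdges_mono le_sup_left _))
  · exact (hK a b h).mono
      (Subgraph.spanningCoe_le_of_le (subgraph_deleteEdges_mono le_sup_right _))

lemma brs_toSubgraph {x : V} {p : G.Walk x x} (hp : p.IsCycle) : BrS p.toSubgraph := by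
  intro a b hab
  have he : s(a, b) ∈ p.edges := p.mem_edges_toSubgraph.mp (Subgraph.mem_edgeSet.mpr hab)
  have hsub : ∀ e ∈ p.edges, e ∈ p.toSubgraph.spanningCoe.edgeSet := by
    intro e hmem
    induction e using Sym2.ind with
    | _ u v =>
      exact (SimpleGraph.mem_edgeSet _).mpr
        (Subgraph.mem_edgeSet.mp (p.mem_edges_toSubgraph.mpr hmem))
  have hq : (p.transfer _ hsub).IsCycle := hp.transfer hsub
  have hqe : s(a, b) ∈ (p.transfer _ hsub).edges := by
    rw [Walk.edges_transfer]; exact he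
  have h2 := SimpleGraph.adj_and_reachable_delete_edges_iff_exists_cycle.mpr
    ⟨x, p.transfer _ hsub, hq, hqe⟩
  have h3 := h2.2
  rw [Subgraph.deleteEdges_spanningCoe_eq] at h3
  exact h3

instance subgraphFinite [Finite V] : Finite (G.Subgraph) := by
  refine Finite.of_injective (fun H => (H.verts, H.edgeSet)) ?_
  intro H K h
  have h1 : H.verts = K.verts := congrArg Prod.fst h
  have h2 : H.edgeSet = K.edgeSet := congrArg Prod.snd h
  refine Subgraph.ext h1 ?_
  funext a b
  exact propext ⟨fun hab => Subgraph.mem_edgeSet.mp (h2 ▸ Subgraph.mem_edgeSet.mpr hab),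
    fun hab => Subgraph.mem_edgeSet.mp (h2.symm ▸ Subgraph.mem_edgeSet.mpr hab)⟩

lemma exists_blob_ge [Finite V] {H : G.Subgraph} (h1 : H.verts.Nontrivial)
    (h2 : H.Connected) (h3 : BrS H) : ∃ B, IsBlob G B ∧ H ≤ B := by
  classical
  set S : Set (G.Subgraph) :=
    {B | B.verts.Nontrivial ∧ B.Connected ∧ BrS B ∧ H ≤ B} with hS
  obtain ⟨M, hM, hmax⟩ := Set.Finite.exists_maximalFor id S (Set.toFinite S)
    ⟨H, h1, h2, h3, le_refl H⟩
  refine ⟨M, ⟨hM.1, hM.2.1, (bridgeless_coe_iff M).mpr hM.2.2.1, ?_⟩, hM.2.2.2⟩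
  intro B' hB1 hB2 hB3 hle
  exact le_antisymm hle (hmax (j := B') ⟨hB1, hB2, (bridgeless_coe_iff B').mp hB3, le_trans hM.2.2.2 hle⟩ hle)

lemma blob_brs {B : G.Subgraph} (hB : IsBlob G B) : BrS B :=
  (bridgeless_coe_iff B).mp hB.2.2.1

lemma bridge_of_leaving {B : G.Subgraph} (hB : IsBlob G B) {u w : V}
    (hu : u ∈ B.verts) (hw : w ∉ B.verts) (hadj : G.Adj u w) : G.IsBridge' s(u, w) := by
  by_contra hnb
  rw [isBridge'_cyc] at hnb
  push_neg at hnb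
  obtain ⟨x, p, hp, he⟩ := hnb hadj
  have huC : u ∈ p.toSubgraph.verts :=
    (p.mem_verts_toSubgraph).mpr (p.fst_mem_support_of_mem_edges he)
  have hwC : w ∈ p.toSubgraph.verts :=
    (p.mem_verts_toSubgraph).mpr (p.snd_mem_support_of_mem_edges he)
  have hconn : (B ⊔ p.toSubgraph).Connected :=
    Subgraph.connected_sup hB.2.1.preconnected p.toSubgraph_connected.preconnected ⟨u, by rw [Subgraph.verts_inf]; exact ⟨hu, huC⟩⟩
  have hbrs : BrS (B ⊔ p.toSubgraph) := (blob_brs hB).sup (brs_toSubgraph hp)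
  have heq := hB.2.2.2 (B ⊔ p.toSubgraph)
    (hB.1.mono (by rw [Subgraph.verts_sup]; exact Set.subset_union_left))
    hconn ((bridgeless_coe_iff _).mpr hbrs) le_sup_left
  apply hw
  rw [heq, Subgraph.verts_sup]
  exact Or.inr hwC

lemma blob_adj_of_adj {B : G.Subgraph} (hB : IsBlob G B) {u v : V}
    (hu : u ∈ B.verts) (hv : v ∈ B.verts) (h : G.Adj u v) : B.Adj u v := by
  classical
  by_cases hBadj : B.Adj u v
  · exact hBadj
  set B' := B ⊔ G.subgraphOfAdj h with hB'
  have hBle : B ≤ B'.deleteEdges {s(u, v)} := by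
    refine ⟨by rw [Subgraph.deleteEdges_verts, Subgraph.verts_sup]; exact Set.subset_union_left, ?_⟩
    intro x y hxy
    refine (Subgraph.deleteEdges_adj _ _ _).mpr ⟨Or.inl hxy, ?_⟩
    intro hmem
    rw [Set.mem_singleton_iff, Sym2.eq_iff] at hmem
    rcases hmem with ⟨rfl, rfl⟩ | ⟨rfl, rfl⟩
    · exact hBadj hxy
    · exact hBadj hxy.symm
  have hbrs : BrS B' := by
    intro a b hab
    rw [Subgraph.sup_adj] at hab
    rcases hab with hab | hab
    · exact ((blob_brs hB) a b hab).mono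
        (Subgraph.spanningCoe_le_of_le (subgraph_deleteEdges_mono le_sup_left _))
    · rw [SimpleGraph.subgraphOfAdj_adj] at hab
      have hab' : s(a, b) = s(u, v) := hab.symm
      have hreach : B.spanningCoe.Reachable a b := by
        rcases Sym2.eq_iff.mp hab' with ⟨rfl, rfl⟩ | ⟨rfl, rfl⟩
        · exact spanning_reach_of_connected hB.2.1 hu hv
        · exact spanning_reach_of_connected hB.2.1 hv hu
      rw [hab']
      exact hreach.mono (Subgraph.spanningCoe_le_of_le hBle)
  have hconn : B'.Connected := Subgraph.connected_sup hB.2.1.preconnected (SimpleGraph.Subgraph.subgraphOfAdj_connected h).preconnected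
    ⟨u, by rw [Subgraph.verts_inf]; exact ⟨hu, by simp⟩⟩
  have heq := hB.2.2.2 B'
    (hB.1.mono (by rw [Subgraph.verts_sup]; exact Set.subset_union_left))
    hconn ((bridgeless_coe_iff _).mpr hbrs) le_sup_left
  rw [heq]
  exact Or.inr (by simp)

lemma blob_eq_of_mem {B1 B2 : G.Subgraph} (hB1 : IsBlob G B1) (hB2 : IsBlob G B2)
    {v : V} (h1 : v ∈ B1.verts) (h2 : v ∈ B2.verts) : B1 = B2 := by
  have hconn : (B1 ⊔ B2).Connected :=
    Subgraph.connected_sup hB1.2.1.preconnected hB2.2.1.preconnected ⟨v, by rw [Subgraph.verts_inf]; exact ⟨h1, h2⟩⟩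
  have hbrs := ((blob_brs hB1).sup (blob_brs hB2))
  have hnt : (B1 ⊔ B2).verts.Nontrivial :=
    hB1.1.mono (by rw [Subgraph.verts_sup]; exact Set.subset_union_left)
  have e1 := hB1.2.2.2 (B1 ⊔ B2) hnt hconn ((bridgeless_coe_iff _).mpr hbrs) le_sup_left
  have e2 := hB2.2.2.2 (B1 ⊔ B2) hnt hconn ((bridgeless_coe_iff _).mpr hbrs) le_sup_right
  exact e1.trans e2.symm

lemma exists_blob_of_not_bridge [Finite V] {u v : V} (h : G.Adj u v)
    (hnb : ¬ G.IsBridge' s(u, v)) : ∃ B, IsBlob G B ∧ B.Adj u v := by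
  rw [isBridge'_cyc] at hnb
  push_neg at hnb
  obtain ⟨x, p, hp, he⟩ := hnb h
  have huC : u ∈ p.toSubgraph.verts :=
    (p.mem_verts_toSubgraph).mpr (p.fst_mem_support_of_mem_edges he)
  have hvC : v ∈ p.toSubgraph.verts :=
    (p.mem_verts_toSubgraph).mpr (p.snd_mem_support_of_mem_edges he)
  obtain ⟨B, hB, hle⟩ := exists_blob_ge ⟨u, huC, v, hvC, h.ne⟩
    p.toSubgraph_connected (brs_toSubgraph hp)
  exact ⟨B, hB, blob_adj_of_adj hB (hle.1 huC) (hle.1 hvC) h⟩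

lemma tree_adj_of_bridge {T : SimpleGraph V} (hle : T ≤ G) (hconn : T.Connected)
    {u w : V} (hbr : G.IsBridge' s(u, w)) : T.Adj u w := by
  classical
  obtain ⟨p⟩ := hconn u w
  by_cases he : s(u, w) ∈ p.edges
  · exact p.adj_of_mem_edges he
  · exfalso
    rw [isBridge'_iff] at hbr
    refine hbr.2 ?_
    rw [del_eq, SimpleGraph.reachable_delete_edges_iff_exists_walk]
    refine ⟨p.mapLe hle, fun hmem => he ?_⟩
    have hedges : (p.mapLe hle).edges = p.edges := by
      unfold Walk.mapLe
      rw [Walk.edges_map]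
      have hid : Sym2.map (SimpleGraph.Hom.ofLE hle) = id := by
        funext e
        induction e using Sym2.ind with
        | _ a b => simp
      rw [hid, List.map_id]
    rwa [hedges] at hmem

lemma spanning_into_deleted {B : G.Subgraph} {u w : V} (hw : w ∉ B.verts) :
    B.spanningCoe ≤ G \ SimpleGraph.fromEdgeSet {s(u, w)} := by
  intro x y hxy
  have hxy' : B.Adj x y := hxy
  refine ⟨B.adj_sub hxy', ?_⟩
  intro hmem
  rw [SimpleGraph.fromEdgeSet_adj] at hmem
  rw [Set.mem_singleton_iff, Sym2.eq_iff] at hmem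
  rcases hmem.1 with ⟨rfl, rfl⟩ | ⟨rfl, rfl⟩
  · exact hw (B.edge_vert hxy'.symm)
  · exact hw (B.edge_vert hxy')

lemma bridge_partner_unique {B : G.Subgraph} (hB : IsBlob G B) {w : V} (hw : w ∉ B.verts)
    {u1 u2 : V} (h1 : u1 ∈ B.verts) (h2 : u2 ∈ B.verts)
    (hb1 : G.IsBridge' s(u1, w)) (hb2 : G.IsBridge' s(u2, w)) : u1 = u2 := by
  by_contra hne
  rw [isBridge'_iff] at hb1
  refine hb1.2 ?_
  have r1 : (G \ SimpleGraph.fromEdgeSet {s(u1, w)}).Reachable u1 u2 :=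
    (spanning_reach_of_connected hB.2.1 h1 h2).mono (spanning_into_deleted hw)
  refine r1.trans (SimpleGraph.Adj.reachable ?_)
  rw [isBridge'_iff] at hb2
  refine ⟨hb2.1, ?_⟩
  intro hmem
  rw [SimpleGraph.fromEdgeSet_adj] at hmem
  rw [Set.mem_singleton_iff, Sym2.eq_iff] at hmem
  rcases hmem.1 with ⟨h, -⟩ | ⟨rfl, rfl⟩
  · exact hne h.symm
  · exact hne rfl

lemma walk_stays {B : G.Subgraph} (hB : IsBlob G B) {T : SimpleGraph V} (hle : T ≤ G) :
    ∀ {u v : V} (p : T.Walk u v), p.IsPath → u ∈ B.verts → v ∈ B.verts →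
      ∀ x ∈ p.support, x ∈ B.verts := by
  intro u v p
  induction p with
  | nil =>
    intro _ hu _ x hx
    rw [Walk.support_nil, List.mem_singleton] at hx
    exact hx ▸ hu
  | @cons u w v h q ih =>
    intro hp hu hv x hx
    by_cases hwB : w ∈ B.verts
    · rw [Walk.support_cons, List.mem_cons] at hx
      rcases hx with rfl | hx
      · exact hu
      · exact ih (hp.of_cons) hwB hv x hx
    · exfalso
      have hbr : G.IsBridge' s(u, w) := bridge_of_leaving hB hu hwB (hle h)
      have hunotq : u ∉ q.support := (Walk.cons_isPath_iff _ _ |>.mp hp).2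
      have heq : s(u, w) ∉ q.edges := fun hmem => hunotq (q.fst_mem_support_of_mem_edges hmem)
      have hedges : (q.mapLe hle).edges = q.edges := by
        unfold Walk.mapLe
        rw [Walk.edges_map]
        have hid : Sym2.map (SimpleGraph.Hom.ofLE hle) = id := by
          funext e
          induction e using Sym2.ind with
          | _ a b => simp
        rw [hid, List.map_id]
      have r1 : (G \ SimpleGraph.fromEdgeSet {s(u, w)}).Reachable w v := by
        refine ⟨(q.mapLe hle).transfer _ ?_⟩
        intro e he'
        have hee : e ∈ q.edges := by rwa [hedges] at he'
        simp only [SimpleGraph.edgeSet_sdiff, SimpleGraph.edgeSet_fromEdgeSet,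
          SimpleGraph.edgeSet_sdiff_sdiff_isDiag, Set.mem_diff, Set.mem_singleton_iff]
        exact ⟨(q.mapLe hle).edges_subset_edgeSet he', fun h' => heq (h' ▸ hee)⟩
      have r2 : (G \ SimpleGraph.fromEdgeSet {s(u, w)}).Reachable v u :=
        (spanning_reach_of_connected hB.2.1 hv hu).mono (spanning_into_deleted hwB)
      rw [isBridge'_iff] at hbr
      exact hbr.2 (r1.trans r2).symm

lemma lift_reach {K : SimpleGraph V} {s t : Set V} {T' : SimpleGraph s} (hts : t ⊆ s)
    (hadj : ∀ a b (ha : a ∈ t) (hb : b ∈ t), K.Adj a b → T'.Adj ⟨a, hts ha⟩ ⟨b, hts hb⟩) :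
    ∀ {u v : V} (p : K.Walk u v), (∀ x ∈ p.support, x ∈ t) →
      ∀ (hu : u ∈ t) (hv : v ∈ t), T'.Reachable ⟨u, hts hu⟩ ⟨v, hts hv⟩ := by
  intro u v p
  induction p with
  | nil => intro _ _ _; exact Reachable.refl _
  | @cons u w v h q ih =>
    intro hsup hu hv
    have hw : w ∈ t := hsup w (by rw [Walk.support_cons]; exact List.mem_cons_of_mem _ q.start_mem_support)
    exact (SimpleGraph.Adj.reachable (hadj u w hu hw h)).trans
      (ih (fun x hx => hsup x (by rw [Walk.support_cons]; exact List.mem_cons_of_mem _ hx)) hw hv)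

lemma reach_of_forall_adj {K T : SimpleGraph V} (h : ∀ a b, K.Adj a b → T.Reachable a b) :
    ∀ {u v : V}, K.Reachable u v → T.Reachable u v := by
  intro u v hr
  obtain ⟨p⟩ := hr
  induction p with
  | nil => exact Reachable.refl _
  | cons hadj q ih => exact (h _ _ hadj).trans ih

lemma two_le_deg {W : Type*} [Finite W] {K : SimpleGraph W} {v y z : W}
    (hy : K.Adj v y) (hz : K.Adj v z) (hne : y ≠ z) : ¬ deg K v ≤ 1 := by
  have h2 : 1 < (K.neighborSet v).ncard :=
    (Set.one_lt_ncard (Set.toFinite _)).mpr ⟨y, hy, z, hz, hne⟩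
  unfold deg
  omega

lemma two_nbrs_of_not_deg_le_one {W : Type*} [Finite W] {K : SimpleGraph W} {v : W}
    (h : ¬ deg K v ≤ 1) : ∃ y z, K.Adj v y ∧ K.Adj v z ∧ y ≠ z := by
  have h2 : 1 < (K.neighborSet v).ncard := by unfold deg at h; omega
  obtain ⟨y, hy, z, hz, hne⟩ := (Set.one_lt_ncard (Set.toFinite _)).mp h2
  exact ⟨y, z, hy, hz, hne⟩

lemma deg_le_of_le {W : Type*} [Finite W] {K L : SimpleGraph W} (h : K ≤ L) (v : W) :
    deg K v ≤ deg L v :=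
  Set.ncard_le_ncard (fun y hy => h hy) (Set.toFinite _)

lemma blob_two_nbrs {B : G.Subgraph} (hB : IsBlob G B) {u : V} (hu : u ∈ B.verts) :
    ∃ y z, B.Adj u y ∧ B.Adj u z ∧ y ≠ z := by
  obtain ⟨w, hwmem, hwne⟩ := hB.1.exists_ne u
  have hy : ∃ y, B.Adj u y := by
    obtain ⟨wk⟩ := hB.2.1 ⟨u, hu⟩ ⟨w, hwmem⟩
    cases wk with
    | nil => exact absurd rfl hwne
    | cons h q => exact ⟨_, h⟩
  obtain ⟨y, hy⟩ := hy
  have huy : u ≠ y := fun h => (B.adj_sub hy).ne (h ▸ rfl)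
  obtain ⟨p⟩ := blob_brs hB u y hy
  cases p with
  | nil => exact absurd rfl huy
  | @cons _ z _ h q =>
    have h' : (B.deleteEdges {s(u, y)}).Adj u z := h
    rw [Subgraph.deleteEdges_adj] at h'
    refine ⟨y, z, hy, h'.1, ?_⟩
    intro hyz
    apply h'.2
    rw [Set.mem_singleton_iff, hyz]

lemma exists_lift_walk {S : Set V} {T : SimpleGraph V} {T' : SimpleGraph S}
    (hhom : ∀ {x y : S}, T'.Adj x y → T.Adj x y) :
    ∀ {u v : V} (c : T.Walk u v)
      (_ : ∀ a b, s(a, b) ∈ c.edges → ∃ (ha : a ∈ S) (hb : b ∈ S), T'.Adj ⟨a, ha⟩ ⟨b, hb⟩)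
      (hu : u ∈ S) (hv : v ∈ S),
      ∃ p : T'.Walk ⟨u, hu⟩ ⟨v, hv⟩,
        p.map (⟨Subtype.val, fun h => hhom h⟩ : T' →g T) = c := by
  intro u v c
  induction c with
  | nil => intro _ _ _; exact ⟨Walk.nil, rfl⟩
  | @cons u w v h q ih =>
    intro hE hu hv
    obtain ⟨ha, hb, hadj⟩ := hE u w (by rw [Walk.edges_cons]; exact List.mem_cons_self)
    obtain ⟨p, hp⟩ := ih (fun a b hmem => hE a b (by rw [Walk.edges_cons]; exact List.mem_cons_of_mem _ hmem)) hb hv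
    exact ⟨Walk.cons (by exact hadj) p, by rw [Walk.map_cons, hp]⟩

/-- Restriction of a graph `T` on `V` to the vertices of the blob network. -/
def restTree (T : SimpleGraph V) (B : G.Subgraph) : SimpleGraph ↥(blobNet G B).verts where
  Adj x y := T.Adj x.val y.val ∧ (blobNet G B).Adj x.val y.val
  symm := ⟨fun x y h => ⟨h.1.symm, (blobNet G B).adj_symm h.2⟩⟩
  loopless := ⟨fun x h => T.loopless.irrefl _ h.1⟩

@[simp] lemma restTree_adj {T : SimpleGraph V} {B : G.Subgraph} {x y : ↥(blobNet G B).verts} :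
    (restTree T B).Adj x y ↔ T.Adj x.val y.val ∧ (blobNet G B).Adj x.val y.val := Iff.rfl

/-- The big support tree glued from support trees of the blob networks and the bridges. -/
def bigTree (G : SimpleGraph V)
    (t : ∀ B : G.Subgraph, IsBlob G B → SimpleGraph ↥(blobNet G B).verts) :
    SimpleGraph V where
  Adj a b := G.IsBridge' s(a, b) ∨ ∃ B, ∃ hB : IsBlob G B,
    ∃ (ha : a ∈ (blobNet G B).verts) (hb : b ∈ (blobNet G B).verts),
      (t B hB).Adj ⟨a, ha⟩ ⟨b, hb⟩
  symm := by
    refine ⟨?_⟩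
    intro a b h
    rcases h with h | ⟨B, hB, ha, hb, h⟩
    · exact Or.inl (Sym2.eq_swap ▸ h)
    · exact Or.inr ⟨B, hB, hb, ha, h.symm⟩
  loopless := by
    refine ⟨?_⟩
    intro a h
    rcases h with h | ⟨B, hB, ha, hb, h⟩
    · exact G.loopless.irrefl a ((SimpleGraph.mem_edgeSet G).mp h.1)
    · exact (t B hB).loopless.irrefl _ (by exact h)

@[simp] lemma bigTree_adj {G : SimpleGraph V}
    {t : ∀ B : G.Subgraph, IsBlob G B → SimpleGraph ↥(blobNet G B).verts} {a b : V} :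
    (bigTree G t).Adj a b ↔ (G.IsBridge' s(a, b) ∨ ∃ B, ∃ hB : IsBlob G B,
      ∃ (ha : a ∈ (blobNet G B).verts) (hb : b ∈ (blobNet G B).verts),
        (t B hB).Adj ⟨a, ha⟩ ⟨b, hb⟩) := Iff.rfl

end Stmt0Aux

/-- A network `G` on `X` is tree-based iff `B_N` is tree-based for every blob `B`. -/
theorem stmt0 {V : Type*} [Fintype V] (G : SimpleGraph V) (X : Set V)
    (hN : IsNetwork G X) :
    TreeBased G X ↔
      ∀ B : G.Subgraph, IsBlob G B →
        TreeBased (blobNet G B).coe (blobNetLeaves G B) := by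
  classical
  obtain ⟨hGconn, hGdeg, hGX⟩ := hN
  constructor
  · rintro ⟨T, hTle, hTtree, hTX⟩ B hB
    have hTconn : T.Connected := hTtree.isConnected
    have hBnotX : ∀ u ∈ B.verts, ¬ deg T u ≤ 1 := by
      intro u hu hdeg
      obtain ⟨y, z, hy, hz, hyz⟩ := Stmt0Aux.blob_two_nbrs hB hu
      have hG2 : ¬ deg G u ≤ 1 := Stmt0Aux.two_le_deg (B.adj_sub hy) (B.adj_sub hz) hyz
      have huX : u ∉ X := fun hh => hG2 (by rwa [← hGX] at hh)
      exact huX (by rw [← hTX]; exact hdeg)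
    have hTadj_to_bn : ∀ u y, u ∈ B.verts → T.Adj u y →
        (blobNet G B).Adj u y ∧ y ∈ (blobNet G B).verts := by
      intro u y hu hadj
      by_cases hyB : y ∈ B.verts
      · exact ⟨Or.inl (Stmt0Aux.blob_adj_of_adj hB hu hyB (hTle hadj)), Or.inl hyB⟩
      · have hbr := Stmt0Aux.bridge_of_leaving hB hu hyB (hTle hadj)
        exact ⟨Or.inr ⟨hbr, Or.inl hu⟩, Or.inr ⟨u, hu, hbr⟩⟩
    refine ⟨Stmt0Aux.restTree T B, fun {x y} h => h.2, ⟨?_, ?_⟩, ?_⟩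
    · -- connected
      rw [SimpleGraph.connected_iff]
      constructor
      · have BtoB : ∀ (u v : V) (hu : u ∈ B.verts) (hv : v ∈ B.verts),
            (Stmt0Aux.restTree T B).Reachable ⟨u, Or.inl hu⟩ ⟨v, Or.inl hv⟩ := by
          intro u v hu hv
          obtain ⟨p0⟩ := hTconn u v
          have hp := p0.toPath.2
          have hsup : ∀ x ∈ (p0.toPath : T.Walk u v).support, x ∈ B.verts :=
            Stmt0Aux.walk_stays hB hTle _ hp hu hv
          exact Stmt0Aux.lift_reach (T' := Stmt0Aux.restTree T B) (Set.subset_union_left)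
            (fun a b ha hb hadj =>
              ⟨hadj, Or.inl (Stmt0Aux.blob_adj_of_adj hB ha hb (hTle hadj))⟩)
            (p0.toPath : T.Walk u v) hsup hu hv
        have toB : ∀ x : ↥(blobNet G B).verts, ∃ (u : V) (hu : u ∈ B.verts),
            (Stmt0Aux.restTree T B).Reachable x ⟨u, Or.inl hu⟩ := by
          rintro ⟨x, hx⟩
          rcases hx with hx' | hx'
          · exact ⟨x, hx', Reachable.refl _⟩
          · obtain ⟨u, hu, hbr⟩ := hx'
            have hTadj : T.Adj u x := Stmt0Aux.tree_adj_of_bridge hTle hTconn hbr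
            refine ⟨u, hu, SimpleGraph.Adj.reachable ?_⟩
            exact ⟨hTadj.symm, (blobNet G B).adj_symm (Or.inr ⟨hbr, Or.inl hu⟩)⟩
        intro x y
        obtain ⟨u, hu, rx⟩ := toB x
        obtain ⟨v, hv, ry⟩ := toB y
        exact rx.trans ((BtoB u v hu hv).trans ry.symm)
      · obtain ⟨a, ha⟩ := hB.1.nonempty
        exact ⟨⟨a, Or.inl ha⟩⟩
    · -- acyclic
      intro v c hc
      have hc' := (Walk.map_isCycle_iff_of_injective
        (f := (⟨Subtype.val, fun h => h.1⟩ : Stmt0Aux.restTree T B →g T))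
        (fun a b hab => Subtype.val_injective hab)).mpr hc
      exact hTtree.isAcyclic _ hc'
    · -- leaves
      ext x
      obtain ⟨xv, hx⟩ := x
      simp only [Set.mem_setOf_eq]
      by_cases hxB : xv ∈ B.verts
      · refine iff_of_false ?_ (fun hh => hh hxB)
        obtain ⟨y, z, hy, hz, hne⟩ := Stmt0Aux.two_nbrs_of_not_deg_le_one (hBnotX xv hxB)
        obtain ⟨hbn1, hm1⟩ := hTadj_to_bn xv y hxB hy
        obtain ⟨hbn2, hm2⟩ := hTadj_to_bn xv z hxB hz
        have h1 : (Stmt0Aux.restTree T B).Adj ⟨xv, hx⟩ ⟨y, hm1⟩ := ⟨hy, hbn1⟩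
        have h2 : (Stmt0Aux.restTree T B).Adj ⟨xv, hx⟩ ⟨z, hm2⟩ := ⟨hz, hbn2⟩
        exact Stmt0Aux.two_le_deg h1 h2 (fun hh => hne (congrArg Subtype.val hh))
      · refine iff_of_true ?_ hxB
        rcases id hx with hx' | hx'
        · exact absurd hx' hxB
        · obtain ⟨u0, hu0, hbr0⟩ := hx'
          have hsub : (Stmt0Aux.restTree T B).neighborSet ⟨xv, Or.inr ⟨u0, hu0, hbr0⟩⟩ ⊆
              {⟨u0, Or.inl hu0⟩} := by
            rintro ⟨y, hymem⟩ hy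
            have hy' : (blobNet G B).Adj xv y := hy.2
            rcases hy' with h2 | ⟨h2, hor⟩
            · exact absurd (B.edge_vert h2) hxB
            · have hyB : y ∈ B.verts := by
                rcases hor with h3 | h3
                · exact absurd h3 hxB
                · exact h3
              have : u0 = y := Stmt0Aux.bridge_partner_unique hB hxB hu0 hyB hbr0
                (Sym2.eq_swap ▸ h2)
              rw [Set.mem_singleton_iff]
              exact Subtype.ext this.symm
          have hcard : deg (Stmt0Aux.restTree T B) ⟨xv, hx⟩ ≤ 1 := by
            unfold deg
            calc ((Stmt0Aux.restTree T B).neighborSet ⟨xv, hx⟩).ncard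
                ≤ ({⟨u0, Or.inl hu0⟩} : Set ↥(blobNet G B).verts).ncard :=
                  Set.ncard_le_ncard hsub (Set.toFinite _)
              _ = 1 := Set.ncard_singleton _
          exact hcard
  · intro hAll
    choose t ht using hAll
    set T := Stmt0Aux.bigTree G t with hT
    have ψadj : ∀ (B : G.Subgraph) (hB : IsBlob G B) {x y : ↥(blobNet G B).verts},
        (t B hB).Adj x y → T.Adj x.val y.val :=
      fun B hB {x y} h => Or.inr ⟨B, hB, x.2, y.2, h⟩
    have hTle : T ≤ G := by
      intro a b h
      rcases h with h | ⟨B, hB, ha, hb, h⟩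
      · exact (SimpleGraph.mem_edgeSet G).mp h.1
      · exact (blobNet G B).adj_sub ((ht B hB).1 h)
    have hTconn : T.Connected := by
      rw [SimpleGraph.connected_iff]
      refine ⟨?_, hGconn.nonempty⟩
      intro x y
      refine Stmt0Aux.reach_of_forall_adj ?_ (hGconn.preconnected x y)
      intro a b hadj
      by_cases hbr : G.IsBridge' s(a, b)
      · exact SimpleGraph.Adj.reachable (Or.inl hbr)
      · obtain ⟨B, hB, hBadj⟩ := Stmt0Aux.exists_blob_of_not_bridge hadj hbr
        have ha : a ∈ (blobNet G B).verts := Or.inl (B.edge_vert hBadj)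
        have hb : b ∈ (blobNet G B).verts := Or.inl (B.edge_vert hBadj.symm)
        have hreach := ((ht B hB).2.1.isConnected).preconnected ⟨a, ha⟩ ⟨b, hb⟩
        exact hreach.map ⟨Subtype.val, fun {x y} h => ψadj B hB h⟩
    have hTacyc : T.IsAcyclic := by
      intro v c hc
      have hnb : ∀ a b, s(a, b) ∈ c.edges → ¬ G.IsBridge' s(a, b) := by
        intro a b hmem hbr
        have hedges : (c.mapLe hTle).edges = c.edges := by
          unfold Walk.mapLe
          rw [Walk.edges_map]
          have hid : Sym2.map (SimpleGraph.Hom.ofLE hTle) = id := by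
            funext e
            induction e using Sym2.ind with
            | _ a b => simp
          rw [hid, List.map_id]
        have hc' : (c.mapLe hTle).IsCycle := hc.mapLe _
        have hnot := (Stmt0Aux.isBridge'_cyc.mp hbr).2
          (c.mapLe hTle) hc'
        rw [hedges] at hnot
        exact hnot hmem
      have hEP : ∀ a b, s(a, b) ∈ c.edges → ∃ B, ∃ hB : IsBlob G B,
          ∃ (ha : a ∈ (blobNet G B).verts) (hb : b ∈ (blobNet G B).verts),
            (t B hB).Adj ⟨a, ha⟩ ⟨b, hb⟩ ∧ B.Adj a b := by
        intro a b hmem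
        have hadj : T.Adj a b := c.adj_of_mem_edges hmem
        rcases hadj with h | ⟨B, hB, ha, hb, h⟩
        · exact absurd h (hnb a b hmem)
        · refine ⟨B, hB, ha, hb, h, ?_⟩
          have hcoe : (blobNet G B).Adj a b := (ht B hB).1 h
          rcases hcoe with h2 | ⟨h2, -⟩
          · exact h2
          · exact absurd h2 (hnb a b hmem)
      cases c with
      | nil => exact hc.ne_nil rfl
      | @cons _ w _ hadj0 q =>
        have hfe : s(v, w) ∈ (Walk.cons hadj0 q).edges := by
          rw [Walk.edges_cons]; exact List.mem_cons_self
        obtain ⟨B0, hB0, -, -, -, hB0adj⟩ := hEP v w hfe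
        have hv0 : v ∈ B0.verts := B0.edge_vert hB0adj
        have main : ∀ {x y : V} (p : T.Walk x y)
            (_ : ∀ a b, s(a, b) ∈ p.edges → ∃ B, ∃ hB : IsBlob G B,
              ∃ (ha : a ∈ (blobNet G B).verts) (hb : b ∈ (blobNet G B).verts),
                (t B hB).Adj ⟨a, ha⟩ ⟨b, hb⟩ ∧ B.Adj a b)
            (hx : x ∈ B0.verts),
            ∃ (hy : y ∈ B0.verts) (p' : (t B0 hB0).Walk ⟨x, Or.inl hx⟩ ⟨y, Or.inl hy⟩),
              p'.map ⟨Subtype.val, fun {a b} h => ψadj B0 hB0 h⟩ = p := by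
          intro x y p
          induction p with
          | nil => intro _ hx; exact ⟨hx, Walk.nil, rfl⟩
          | @cons x w' y h q' ih =>
            intro hE hx
            obtain ⟨B, hB, ha, hb, hadj', hBadj'⟩ := hE x w'
              (by rw [Walk.edges_cons]; exact List.mem_cons_self)
            have hBeq : B = B0 :=
              Stmt0Aux.blob_eq_of_mem hB hB0 (B.edge_vert hBadj') hx
            subst hBeq
            have hirr : hB = hB0 := rfl
            rw [hirr] at hadj'
            have hw' : w' ∈ B.verts := B.edge_vert hBadj'.symm
            obtain ⟨hy, p', hp'⟩ := ih
              (fun a b hmem => hE a b (by rw [Walk.edges_cons]; exact List.mem_cons_of_mem _ hmem))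
              hw'
            refine ⟨hy, Walk.cons (by exact hadj') p', ?_⟩
            rw [Walk.map_cons, hp']
        obtain ⟨hyv, c', hmap⟩ := main (Walk.cons hadj0 q) hEP hv0
        have hc2 : c'.IsCycle := by
          refine (Walk.map_isCycle_iff_of_injective
            (f := (⟨Subtype.val, fun {a b} h => ψadj B0 hB0 h⟩ : (t B0 hB0) →g T))
            (fun a b hab => Subtype.val_injective hab)).mp ?_
          rw [hmap]
          exact hc
        exact (ht B0 hB0).2.1.isAcyclic _ hc2
    have hTleaves : {v | deg T v ≤ 1} = X := by
      ext v
      simp only [Set.mem_setOf_eq]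
      constructor
      · intro hdeg
        by_contra hvX
        have hGv : ¬ deg G v ≤ 1 := fun hh => hvX (hGX ▸ hh)
        by_cases hblob : ∃ B, ∃ _ : IsBlob G B, v ∈ B.verts
        · obtain ⟨B, hB, hvB⟩ := hblob
          have hnv : v ∈ (blobNet G B).verts := Or.inl hvB
          have hnl : (⟨v, hnv⟩ : ↥(blobNet G B).verts) ∉ blobNetLeaves G B :=
            fun hh => hh hvB
          have hnd : ¬ deg (t B hB) ⟨v, hnv⟩ ≤ 1 := by
            intro hh
            exact hnl ((ht B hB).2.2 ▸ hh)
          obtain ⟨y, z, hy, hz, hne⟩ := Stmt0Aux.two_nbrs_of_not_deg_le_one hnd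
          exact Stmt0Aux.two_le_deg (ψadj B hB hy) (ψadj B hB hz)
            (fun hh => hne (Subtype.ext hh)) hdeg
        · obtain ⟨y, z, hy, hz, hne⟩ := Stmt0Aux.two_nbrs_of_not_deg_le_one hGv
          have hbry : G.IsBridge' s(v, y) := by
            by_contra hnb
            obtain ⟨B, hB, hBadj⟩ := Stmt0Aux.exists_blob_of_not_bridge hy hnb
            exact hblob ⟨B, hB, B.edge_vert hBadj⟩
          have hbrz : G.IsBridge' s(v, z) := by
            by_contra hnb
            obtain ⟨B, hB, hBadj⟩ := Stmt0Aux.exists_blob_of_not_bridge hz hnb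
            exact hblob ⟨B, hB, B.edge_vert hBadj⟩
          exact Stmt0Aux.two_le_deg (Or.inl hbry : T.Adj v y) (Or.inl hbrz : T.Adj v z)
            hne hdeg
      · intro hvX
        have hGv : deg G v ≤ 1 := by rw [← hGX] at hvX; exact hvX
        exact le_trans (Stmt0Aux.deg_le_of_le hTle v) hGv
    exact ⟨T, hTle, ⟨hTconn, hTacyc⟩, hTleaves⟩
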